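/- The presented group on three generators x₁, x₂, x₃ with defining relations (x₂x₃)² = (x₃x₂)², (x₁x₃)² = (x₃x₁)², x₁x₂ = x₂x₁, and x₂·(x₃x₁x₃⁻¹) = (x₃x₁x₃⁻¹)·x₂ is big, i.e. it contains a subgroup which is free of rank 2. -/

import Mathlib

namespace Stmt15

/-- A group `G` is big if it contains a free subgroup of rank 2, i.e. there is an
injective group homomorphism from the free group on two generators into `G`. -/
def Big (G : Type*) [Group G] : Prop :=
  ∃ f : FreeGroup (Fin 2) →* G, Function.Injective f

/-- Generators `x₁, x₂, x₃` of the free group, indexed by `0, 1, 2`. -/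
def x (i : Fin 3) : FreeGroup (Fin 3) := FreeGroup.of i

/-- The relators of the presentation with defining relations `(x₂x₃)² = (x₃x₂)²`,
`(x₁x₃)² = (x₃x₁)²`, `x₁x₂ = x₂x₁` and `x₂(x₃x₁x₃⁻¹) = (x₃x₁x₃⁻¹)x₂`. -/
def rels : Set (FreeGroup (Fin 3)) :=
  { (x 1 * x 2) ^ 2 * ((x 2 * x 1) ^ 2)⁻¹,
    (x 0 * x 2) ^ 2 * ((x 2 * x 0) ^ 2)⁻¹,
    x 0 * x 1 * (x 1 * x 0)⁻¹,
    x 1 * (x 2 * x 0 * (x 2)⁻¹) * ((x 2 * x 0 * (x 2)⁻¹) * x 1)⁻¹ }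

/-! ### The ping-pong setup -/

/-- Nonzero vectors of the plane. -/
abbrev Pt : Type := {v : ℝ × ℝ // v ≠ 0}

/-- Horizontal shear by 4, as a permutation of the plane. -/
def shearA : Equiv.Perm (ℝ × ℝ) where
  toFun p := (p.1 + 4 * p.2, p.2)
  invFun p := (p.1 - 4 * p.2, p.2)
  left_inv p := by simp
  right_inv p := by simp

/-- Vertical shear by 4, as a permutation of the plane. -/
def shearB : Equiv.Perm (ℝ × ℝ) where
  toFun p := (p.1, p.2 + 4 * p.1)
  invFun p := (p.1, p.2 - 4 * p.1)
  left_inv p := by simp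
  right_inv p := by simp

/-- Coordinate swap, as a permutation of the plane. -/
def swapP : Equiv.Perm (ℝ × ℝ) where
  toFun p := (p.2, p.1)
  invFun p := (p.2, p.1)
  left_inv p := by simp
  right_inv p := by simp

lemma ne_zero_iff (p : ℝ × ℝ) : p ≠ 0 ↔ ¬(p.1 = 0 ∧ p.2 = 0) := by
  rw [Ne, Prod.ext_iff]; simp

lemma shearA_pres : ∀ p : ℝ × ℝ, p ≠ 0 ↔ shearA p ≠ 0 := by
  intro p
  rw [ne_zero_iff, ne_zero_iff]
  simp only [shearA, Equiv.coe_fn_mk]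
  constructor <;> intro h hc <;> apply h <;>
    cases hc <;> constructor <;> first | assumption | linarith

lemma shearB_pres : ∀ p : ℝ × ℝ, p ≠ 0 ↔ shearB p ≠ 0 := by
  intro p
  rw [ne_zero_iff, ne_zero_iff]
  simp only [shearB, Equiv.coe_fn_mk]
  constructor <;> intro h hc <;> apply h <;>
    cases hc <;> constructor <;> first | assumption | linarith

lemma swapP_pres : ∀ p : ℝ × ℝ, p ≠ 0 ↔ swapP p ≠ 0 := by
  intro p
  rw [ne_zero_iff, ne_zero_iff]
  simp only [swapP, Equiv.coe_fn_mk]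
  tauto

/-- The shear `A` restricted to nonzero vectors. -/
def A : Equiv.Perm Pt := shearA.subtypePerm (fun p => (shearA_pres p).symm)

/-- The shear `B` restricted to nonzero vectors. -/
def B : Equiv.Perm Pt := shearB.subtypePerm (fun p => (shearB_pres p).symm)

/-- The swap restricted to nonzero vectors. -/
def U : Equiv.Perm Pt := swapP.subtypePerm (fun p => (swapP_pres p).symm)

lemma A_apply (v : Pt) : (A v).1 = (v.1.1 + 4 * v.1.2, v.1.2) := rfl

lemma A_inv_apply (v : Pt) : (A⁻¹ v).1 = (v.1.1 - 4 * v.1.2, v.1.2) := rfl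

lemma B_apply (v : Pt) : (B v).1 = (v.1.1, v.1.2 + 4 * v.1.1) := rfl

lemma B_inv_apply (v : Pt) : (B⁻¹ v).1 = (v.1.1, v.1.2 - 4 * v.1.1) := rfl

lemma U_sq : U * U = 1 := Equiv.ext fun v => rfl

lemma UAU : U * A * U = B := Equiv.ext fun v => rfl

/-- Ping-pong sets: attracting sets. -/
def X : Fin 2 → Set Pt :=
  ![{v | 2 * |v.1.2| ≤ |v.1.1| ∧ 0 ≤ v.1.1 * v.1.2},
    {v | 2 * |v.1.1| ≤ |v.1.2| ∧ 0 ≤ v.1.1 * v.1.2}]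

/-- Ping-pong sets: repelling sets. -/
def Y : Fin 2 → Set Pt :=
  ![{v | 2 * |v.1.2| ≤ |v.1.1| ∧ v.1.1 * v.1.2 < 0},
    {v | 2 * |v.1.1| ≤ |v.1.2| ∧ v.1.1 * v.1.2 < 0}]

lemma key1 (a b : ℝ) (h : ¬(2 * |b| ≤ |a| ∧ a * b < 0)) :
    2 * |b| ≤ |a + 4 * b| ∧ 0 ≤ (a + 4 * b) * b := by
  rcases le_or_gt 0 (a * b) with hab | hab
  · rcases abs_cases a with ⟨h1, h2⟩ | ⟨h1, h2⟩ <;>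
      rcases abs_cases b with ⟨h3, h4⟩ | ⟨h3, h4⟩ <;>
      rcases abs_cases (a + 4 * b) with ⟨h5, h6⟩ | ⟨h5, h6⟩ <;>
      constructor <;> nlinarith
  · have hb : b ≠ 0 := by rintro rfl; simp at hab
    have hb2 : 0 < b * b := mul_self_pos.mpr hb
    have hlt : |a| < 2 * |b| := by
      by_contra hc
      push_neg at hc
      exact h ⟨hc, hab⟩
    rcases abs_cases a with ⟨h1, h2⟩ | ⟨h1, h2⟩ <;>
      rcases abs_cases b with ⟨h3, h4⟩ | ⟨h3, h4⟩ <;>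
      rcases abs_cases (a + 4 * b) with ⟨h5, h6⟩ | ⟨h5, h6⟩ <;>
      constructor <;> nlinarith

lemma key2 (a b : ℝ) (h : ¬(2 * |b| ≤ |a| ∧ 0 ≤ a * b)) :
    2 * |b| ≤ |a - 4 * b| ∧ (a - 4 * b) * b < 0 := by
  push_neg at h
  have hb : b ≠ 0 := by
    rintro rfl
    exact absurd (h (by simp [abs_nonneg])) (by simp)
  have hb2 : 0 < b * b := mul_self_pos.mpr hb
  rcases lt_or_ge (a * b) 0 with hab | hab
  · rcases abs_cases a with ⟨h1, h2⟩ | ⟨h1, h2⟩ <;>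
      rcases abs_cases b with ⟨h3, h4⟩ | ⟨h3, h4⟩ <;>
      rcases abs_cases (a - 4 * b) with ⟨h5, h6⟩ | ⟨h5, h6⟩ <;>
      constructor <;> nlinarith
  · have hlt : |a| < 2 * |b| := by
      by_contra hc
      push_neg at hc
      exact absurd hab (not_le.mpr (h hc))
    rcases abs_cases a with ⟨h1, h2⟩ | ⟨h1, h2⟩ <;>
      rcases abs_cases b with ⟨h3, h4⟩ | ⟨h3, h4⟩ <;>
      rcases abs_cases (a - 4 * b) with ⟨h5, h6⟩ | ⟨h5, h6⟩ <;>
      constructor <;> nlinarith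

lemma vec_ne (v : Pt) : ¬(2 * |v.1.2| ≤ |v.1.1| ∧ 2 * |v.1.1| ≤ |v.1.2|) := by
  rintro ⟨h1, h2⟩
  have h3 := abs_nonneg v.1.1
  have h4 := abs_nonneg v.1.2
  have hx : v.1.1 = 0 := by rw [← abs_eq_zero]; linarith
  have hy : v.1.2 = 0 := by rw [← abs_eq_zero]; linarith
  exact v.2 (by rw [Prod.ext_iff]; exact ⟨hx, hy⟩)

lemma disjXX : Disjoint (X 0) (X 1) :=
  Set.disjoint_left.mpr fun v hv hv' => vec_ne v ⟨hv.1, hv'.1⟩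

lemma disjYY : Disjoint (Y 0) (Y 1) :=
  Set.disjoint_left.mpr fun v hv hv' => vec_ne v ⟨hv.1, hv'.1⟩

lemma disjX0Y0 : Disjoint (X 0) (Y 0) :=
  Set.disjoint_left.mpr fun v hv hv' => absurd hv.2 (not_le.mpr hv'.2)

lemma disjX1Y1 : Disjoint (X 1) (Y 1) :=
  Set.disjoint_left.mpr fun v hv hv' => absurd hv.2 (not_le.mpr hv'.2)

lemma disjX0Y1 : Disjoint (X 0) (Y 1) :=
  Set.disjoint_left.mpr fun v hv hv' => vec_ne v ⟨hv.1, hv'.1⟩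

lemma disjX1Y0 : Disjoint (X 1) (Y 0) :=
  Set.disjoint_left.mpr fun v hv hv' => vec_ne v ⟨hv'.1, hv.1⟩

lemma hXdisj : Pairwise (Function.onFun Disjoint X) := by
  intro i j hij
  fin_cases i <;> fin_cases j <;>
    first
      | exact absurd rfl hij
      | exact disjXX
      | exact disjXX.symm

lemma hYdisj : Pairwise (Function.onFun Disjoint Y) := by
  intro i j hij
  fin_cases i <;> fin_cases j <;>
    first
      | exact absurd rfl hij
      | exact disjYY
      | exact disjYY.symm

lemma hXYdisj : ∀ i j, Disjoint (X i) (Y j) := by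
  intro i j
  fin_cases i <;> fin_cases j
  · exact disjX0Y0
  · exact disjX0Y1
  · exact disjX1Y0
  · exact disjX1Y1

open Pointwise in
lemma hX : ∀ i, (![A, B] : Fin 2 → Equiv.Perm Pt) i • (Y i)ᶜ ⊆ X i := by
  intro i
  fin_cases i
  · rintro w ⟨v, hv, rfl⟩
    exact key1 v.1.1 v.1.2 hv
  · rintro w ⟨v, hv, rfl⟩
    have hv' : ¬(2 * |v.1.1| ≤ |v.1.2| ∧ v.1.2 * v.1.1 < 0) := by
      rintro ⟨h1, h2⟩
      rw [mul_comm] at h2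
      exact hv ⟨h1, h2⟩
    obtain ⟨h1, h2⟩ := key1 v.1.2 v.1.1 hv'
    exact ⟨h1, by rw [mul_comm] at h2; exact h2⟩

open Pointwise in
lemma hY : ∀ i, (![A, B] : Fin 2 → Equiv.Perm Pt)⁻¹ i • (X i)ᶜ ⊆ Y i := by
  intro i
  fin_cases i
  · rintro w ⟨v, hv, rfl⟩
    exact key2 v.1.1 v.1.2 hv
  · rintro w ⟨v, hv, rfl⟩
    have hv' : ¬(2 * |v.1.1| ≤ |v.1.2| ∧ 0 ≤ v.1.2 * v.1.1) := by
      rintro ⟨h1, h2⟩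
      rw [mul_comm] at h2
      exact hv ⟨h1, h2⟩
    obtain ⟨h1, h2⟩ := key2 v.1.2 v.1.1 hv'
    exact ⟨h1, by rw [mul_comm] at h2; exact h2⟩

lemma hXnonempty : ∀ i, (X i).Nonempty := by
  intro i
  fin_cases i
  · exact ⟨⟨(1, 0), by rw [ne_zero_iff]; norm_num⟩, by constructor <;> norm_num⟩
  · exact ⟨⟨(0, 1), by rw [ne_zero_iff]; norm_num⟩, by constructor <;> norm_num⟩

lemma freeAB : Function.Injective (FreeGroup.lift ![A, B]) :=
  FreeGroup.injective_lift_of_ping_pong ![A, B] X Y hXnonempty hXdisj hYdisj hXYdisj hX hY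

/-- The images of the three generators. -/
def F : Fin 3 → Equiv.Perm Pt := ![A, 1, U * A⁻¹]

lemma hrels : ∀ r ∈ rels, FreeGroup.lift F r = 1 := by
  have e1 : U * A⁻¹ * A = U := by group
  intro r hr
  rcases hr with rfl | rfl | rfl | rfl <;>
    simp only [x, map_mul, map_pow, map_inv, FreeGroup.lift_apply_of, F,
      Matrix.cons_val_zero, Matrix.cons_val_one, Matrix.head_cons, Matrix.cons_val_two,
      Matrix.tail_cons]
  · group
  · rw [mul_inv_eq_one, show (A * (U * A⁻¹)) ^ 2 = A * (U * U) * A⁻¹ from by rw [sq]; group,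
      U_sq, e1, sq, U_sq]
    simp
  · group
  · group

theorem presentedGroup_big : Big (PresentedGroup rels) := by
  classical
  refine ⟨(FreeGroup.lift ![PresentedGroup.of 0,
      PresentedGroup.of 2 * PresentedGroup.of 0 * PresentedGroup.of 0 *
        (PresentedGroup.of 2 * PresentedGroup.of 0)⁻¹]), ?_⟩
  have e1 : U * A⁻¹ * A = U := by group
  have hUinv : U⁻¹ = U := inv_eq_of_mul_eq_one_right U_sq
  have hcomp : (PresentedGroup.toGroup hrels).comp
      (FreeGroup.lift ![PresentedGroup.of 0,
        PresentedGroup.of 2 * PresentedGroup.of 0 * PresentedGroup.of 0 *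
          (PresentedGroup.of 2 * PresentedGroup.of 0)⁻¹]) = FreeGroup.lift ![A, B] := by
    apply FreeGroup.ext_hom
    intro i
    fin_cases i
    · simp [F, PresentedGroup.toGroup.of]
    · have hB : U * A⁻¹ * A * A * (U * A⁻¹ * A)⁻¹ = B := by rw [e1, hUinv, UAU]
      simp only [MonoidHom.comp_apply, FreeGroup.lift_apply_of, Fin.mk_one, Fin.isValue,
        Matrix.cons_val_one, Matrix.head_cons, map_mul, map_inv, PresentedGroup.toGroup.of, F,
        Matrix.cons_val_zero, Matrix.cons_val_two, Matrix.tail_cons]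
      exact hB
  have : Function.Injective ((PresentedGroup.toGroup hrels).comp
      (FreeGroup.lift ![PresentedGroup.of 0,
        PresentedGroup.of 2 * PresentedGroup.of 0 * PresentedGroup.of 0 *
          (PresentedGroup.of 2 * PresentedGroup.of 0)⁻¹])) := by
    rw [hcomp]; exact freeAB
  exact fun a b h => this (by simp only [MonoidHom.comp_apply, h])

end Stmt15
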